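/- arXiv:1001.1653 — 4 statements merged into one kernel-verified Lean document; each statement's English description precedes it below -/
import Mathlib

section
/- In the probability forecasting game, for every ε > 0 and C > 1 there exists N and a safe strategy for Skeptic such that for all plays of Forecaster and Reality, either |(1/N)∑_{n=1}^N y_n − (1/N)∑_{n=1}^N p_n| < ε or K_N ≥ C (game-theoretic weak law of large numbers). -/
/-- Skeptic's capital process given a strategy `S` mapping the history
`(p₁,y₁),…,(p_{n-1},y_{n-1})` and the current forecast `pₙ` to the move `sₙ`. -/
def cap (S : List (ℝ × ℝ) → ℝ → ℝ) (p y : ℕ → ℝ) : ℕ → ℝ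
  | 0 => 1
  | n + 1 =>
      cap S p y n +
        S (List.ofFn (fun i : Fin n => (p i, y i))) (p n) * (y n - p n)

/-- Game-theoretic weak law of large numbers: for every ε > 0 and C > 1 there
is a horizon N and a safe strategy for Skeptic forcing either the frequency of
1's to be within ε of the average forecast, or the final capital to reach C. -/
theorem stmt_5 (ε C : ℝ) (hε : 0 < ε) (hC : 1 < C) :
    ∃ N : ℕ, 0 < N ∧ ∃ S : List (ℝ × ℝ) → ℝ → ℝ,
      ∀ p y : ℕ → ℝ, (∀ n, p n ∈ Set.Icc (0 : ℝ) 1) →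
        (∀ n, y n = 0 ∨ y n = 1) →
        (∀ n, 0 ≤ cap S p y n) ∧
          (|(∑ n ∈ Finset.range N, y n) / N - (∑ n ∈ Finset.range N, p n) / N| < ε ∨
            C ≤ cap S p y N) := by
  set N : ℕ := max 1 ⌈C / (4 * ε ^ 2)⌉₊ with hNdef
  have hN1 : 1 ≤ N := le_max_left _ _
  have hNpos : (0 : ℝ) < N := by exact_mod_cast Nat.lt_of_lt_of_le Nat.one_pos hN1
  set a : ℝ := 4 / N with ha
  have hapos : 0 < a := by positivity
  have haN : a * N = 4 := by rw [ha]; exact div_mul_cancel₀ 4 hNpos.ne'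
  set S : List (ℝ × ℝ) → ℝ → ℝ := fun h q =>
    if h.length < N then a * (2 * (h.map (fun x => x.2 - x.1)).sum + 1 - 2 * q) else 0 with hS
  refine ⟨N, Nat.lt_of_lt_of_le Nat.one_pos hN1, S, ?_⟩
  intro p y hp hy
  have key : ∀ n, n ≤ N → cap S p y n =
      a * ((∑ i ∈ Finset.range n, (y i - p i)) ^ 2
        - ∑ i ∈ Finset.range n, p i * (1 - p i)) + 1 := by
    intro n hn
    induction n with
    | zero => simp [cap]
    | succ n ih =>
      have hnN : n < N := hn
      rw [cap, ih hnN.le, hS]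
      simp only [List.map_ofFn, List.length_ofFn, if_pos hnN, List.sum_ofFn,
        Function.comp, Fin.sum_univ_eq_sum_range]
      rw [Fin.sum_univ_eq_sum_range (fun i => y i - p i) n]
      rw [Finset.sum_range_succ, Finset.sum_range_succ (fun i => p i * (1 - p i))]
      rcases hy n with h | h <;> rw [h] <;> ring
  have hTle : ∀ n, n ≤ N → (∑ i ∈ Finset.range n, p i * (1 - p i)) ≤ (N : ℝ) / 4 := by
    intro n hn
    calc (∑ i ∈ Finset.range n, p i * (1 - p i))
        ≤ ∑ i ∈ Finset.range n, (1 : ℝ) / 4 := by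
          refine Finset.sum_le_sum fun i _ => ?_
          have h1 := (hp i).1
          have h2 := (hp i).2
          nlinarith [sq_nonneg (1 - 2 * p i)]
      _ = (n : ℝ) / 4 := by simp [Finset.sum_const]; ring
      _ ≤ (N : ℝ) / 4 := by
          have : (n : ℝ) ≤ N := by exact_mod_cast hn
          linarith
  have hsafe_le : ∀ n, n ≤ N → 0 ≤ cap S p y n := by
    intro n hn
    rw [key n hn]
    have hT := hTle n hn
    have hM : 0 ≤ (∑ i ∈ Finset.range n, (y i - p i)) ^ 2 := sq_nonneg _
    nlinarith
  have hconst : ∀ m, cap S p y (N + m) = cap S p y N := by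
    intro m
    induction m with
    | zero => rfl
    | succ m ih =>
      have : ¬ (N + m < N) := by omega
      rw [show N + (m + 1) = (N + m) + 1 from rfl, cap, ih, hS]
      simp [List.length_ofFn, this]
  have hsafe : ∀ n, 0 ≤ cap S p y n := by
    intro n
    rcases le_or_gt n N with h | h
    · exact hsafe_le n h
    · have := hconst (n - N)
      rw [Nat.add_sub_cancel' h.le] at this
      rw [this]
      exact hsafe_le N le_rfl
  refine ⟨hsafe, ?_⟩
  by_cases hbig : |(∑ n ∈ Finset.range N, y n) / N - (∑ n ∈ Finset.range N, p n) / N| < ε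
  · exact Or.inl hbig
  · right
    push_neg at hbig
    set M : ℝ := ∑ i ∈ Finset.range N, (y i - p i) with hM
    have hMeq : (∑ n ∈ Finset.range N, y n) / N - (∑ n ∈ Finset.range N, p n) / N
        = M / N := by
      rw [hM, Finset.sum_sub_distrib]; ring
    rw [hMeq] at hbig
    have habs : ε * N ≤ |M| := by
      have := (abs_div M (N : ℝ)) ▸ hbig
      rw [abs_of_pos hNpos] at this
      calc ε * N ≤ (|M| / N) * N := by nlinarith
        _ = |M| := by field_simp
    have hM2 : ε ^ 2 * N ^ 2 ≤ M ^ 2 := by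
      have h1 : (ε * N) ^ 2 ≤ |M| ^ 2 := by
        have h0 : 0 ≤ ε * N := by positivity
        nlinarith [abs_nonneg M]
      rw [sq_abs] at h1
      nlinarith
    have hNC : C ≤ 4 * ε ^ 2 * N := by
      have h1 : C / (4 * ε ^ 2) ≤ (N : ℝ) := by
        have := Nat.le_ceil (C / (4 * ε ^ 2))
        have h2 : ((⌈C / (4 * ε ^ 2)⌉₊ : ℕ) : ℝ) ≤ (N : ℝ) :=
          Nat.cast_le.mpr (le_max_right 1 ⌈C / (4 * ε ^ 2)⌉₊)
        linarith
      have h4 : (0 : ℝ) < 4 * ε ^ 2 := by positivity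
      calc C = (C / (4 * ε ^ 2)) * (4 * ε ^ 2) := by field_simp
        _ ≤ (N : ℝ) * (4 * ε ^ 2) := by nlinarith
        _ = 4 * ε ^ 2 * N := by ring
    rw [key N le_rfl]
    have hT := hTle N le_rfl
    have h5 : a * (ε ^ 2 * N ^ 2) = 4 * ε ^ 2 * N := by
      rw [show a * (ε ^ 2 * N ^ 2) = (a * N) * ε ^ 2 * N by ring, haN]
    nlinarith [hapos]
end

section
/- A belief function defined from a multivalued mapping is ∞-monotone (totally monotone): for any finite family A_1,…,A_n of subsets of Ω, Bel(A_1 ∪ ⋯ ∪ A_n) ≥ ∑_{∅ ≠ I ⊆ {1,…,n}} (−1)^{|I|+1} Bel(⋂_{i∈I} A_i). -/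
open scoped Classical

/-- A belief function from a multivalued mapping is totally (∞-)monotone. -/
theorem stmt_10 {X Ω : Type*} [Fintype X] [Fintype Ω]
    (P : X → ℝ) (hP : ∀ x, 0 ≤ P x) (hPsum : ∑ x, P x = 1)
    (Γ : X → Set Ω) (hΓ : ∀ x, (Γ x).Nonempty)
    (Bel : Set Ω → ℝ)
    (hBel : ∀ A, Bel A = ∑ x, if Γ x ⊆ A then P x else 0)
    (n : ℕ) (A : Fin n → Set Ω) :
    ∑ I ∈ Finset.univ.powerset.filter (fun I : Finset (Fin n) => I.Nonempty),
        (-1 : ℝ) ^ (I.card + 1) * Bel (⋂ i ∈ I, A i) ≤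
      Bel (⋃ i, A i) := by
  classical
  simp only [hBel, Finset.mul_sum]
  rw [Finset.sum_comm]
  apply Finset.sum_le_sum
  intro x _
  set S : Finset (Fin n) := Finset.univ.filter (fun i => Γ x ⊆ A i) with hS
  have hterm : ∀ I : Finset (Fin n),
      ((-1 : ℝ) ^ (I.card + 1) * if Γ x ⊆ ⋂ i ∈ I, A i then P x else 0)
        = if I ⊆ S then (-1 : ℝ) ^ (I.card + 1) * P x else 0 := by
    intro I
    have : (Γ x ⊆ ⋂ i ∈ I, A i) ↔ I ⊆ S := by
      constructor
      · intro h i hi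
        simp only [hS, Finset.mem_filter, Finset.mem_univ, true_and]
        exact h.trans (Set.biInter_subset_of_mem hi)
      · intro h
        intro ω hω
        simp only [Set.mem_iInter]
        intro i hi
        have := h hi
        simp only [hS, Finset.mem_filter, Finset.mem_univ, true_and] at this
        exact this hω
    rw [this]
    split_ifs <;> simp
  simp only [hterm]
  rw [← Finset.sum_filter]
  have hfil : (Finset.univ.powerset.filter (fun I : Finset (Fin n) => I.Nonempty)).filter
      (fun I => I ⊆ S) = S.powerset.filter (fun I => I.Nonempty) := by
    ext I
    simp [Finset.mem_filter, Finset.mem_powerset, and_comm]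
  rw [hfil, ← Finset.sum_mul]
  by_cases hSne : S.Nonempty
  · have h0z := Finset.sum_powerset_neg_one_pow_card_of_nonempty (x := S) hSne
    have h0 : ∑ I ∈ S.powerset, (-1 : ℝ) ^ I.card = 0 := by exact_mod_cast h0z
    have h1 : ∑ I ∈ S.powerset.filter (fun I => I.Nonempty), (-1 : ℝ) ^ I.card = -1 := by
      have hsplit := (Finset.add_sum_erase S.powerset (fun I => (-1 : ℝ) ^ I.card)
        (Finset.empty_mem_powerset S)).symm
      have herase : S.powerset.erase ∅ = S.powerset.filter (fun I => I.Nonempty) := by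
        ext I
        simp [Finset.nonempty_iff_ne_empty, and_comm]
      rw [hsplit, herase] at h0
      simp at h0
      linarith
    have h2 : ∑ I ∈ S.powerset.filter (fun I => I.Nonempty), (-1 : ℝ) ^ (I.card + 1) = 1 := by
      simp only [pow_succ]
      rw [← Finset.sum_mul, h1]; ring
    rw [h2, one_mul]
    have : Γ x ⊆ ⋃ i, A i := by
      obtain ⟨i, hi⟩ := hSne
      simp only [hS, Finset.mem_filter, Finset.mem_univ, true_and] at hi
      exact hi.trans (Set.subset_iUnion A i)
    simp [this]
  · have : S.powerset.filter (fun I => I.Nonempty) = ∅ := by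
      rw [Finset.not_nonempty_iff_eq_empty] at hSne
      ext I
      simp [hSne, Finset.subset_empty, Finset.nonempty_iff_ne_empty]
    rw [this]
    simp only [Finset.sum_empty, zero_mul]
    split_ifs
    · exact hP x
    · exact le_rfl
end

section
/- Dempster's rule via product spaces: given (X₁,P₁,Γ₁) and (X₂,P₂,Γ₂) with Γᵢ(x) nonempty subsets of the same Ω, and assuming c := (P₁×P₂){(x₁,x₂) : Γ₁(x₁) ∩ Γ₂(x₂) ≠ ∅} > 0, the function Bel(A) := (P₁×P₂){(x₁,x₂) : ∅ ≠ Γ₁(x₁) ∩ Γ₂(x₂) ⊆ A} / c is a belief function on Ω, arising from the product probability conditioned on non-empty intersection with the multivalued map (x₁,x₂) ↦ Γ₁(x₁) ∩ Γ₂(x₂). -/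
open scoped Classical

/-- Dempster's rule via product spaces: the combined Bel arises from the
product probability conditioned on non-empty intersection together with the
multivalued map (x₁,x₂) ↦ Γ₁(x₁) ∩ Γ₂(x₂). -/
theorem stmt_14 {X₁ X₂ Ω : Type*} [Fintype X₁] [Fintype X₂] [Fintype Ω]
    (P₁ : X₁ → ℝ) (hP₁ : ∀ x, 0 ≤ P₁ x) (hP₁sum : ∑ x, P₁ x = 1)
    (P₂ : X₂ → ℝ) (hP₂ : ∀ x, 0 ≤ P₂ x) (hP₂sum : ∑ x, P₂ x = 1)
    (Γ₁ : X₁ → Set Ω) (hΓ₁ : ∀ x, (Γ₁ x).Nonempty)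
    (Γ₂ : X₂ → Set Ω) (hΓ₂ : ∀ x, (Γ₂ x).Nonempty)
    (c : ℝ)
    (hc : c = ∑ x : X₁ × X₂,
        if (Γ₁ x.1 ∩ Γ₂ x.2).Nonempty then P₁ x.1 * P₂ x.2 else 0)
    (hcpos : 0 < c)
    (Bel : Set Ω → ℝ)
    (hBel : ∀ A, Bel A = (∑ x : X₁ × X₂,
        if (Γ₁ x.1 ∩ Γ₂ x.2).Nonempty ∧ Γ₁ x.1 ∩ Γ₂ x.2 ⊆ A then
          P₁ x.1 * P₂ x.2 else 0) / c)
    (P' : X₁ × X₂ → ℝ)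
    (hP' : ∀ x, P' x =
        if (Γ₁ x.1 ∩ Γ₂ x.2).Nonempty then P₁ x.1 * P₂ x.2 / c else 0) :
    ((∀ x, 0 ≤ P' x) ∧ ∑ x, P' x = 1) ∧
      ∀ A : Set Ω, Bel A = ∑ x : X₁ × X₂,
        if (Γ₁ x.1 ∩ Γ₂ x.2).Nonempty ∧ Γ₁ x.1 ∩ Γ₂ x.2 ⊆ A then P' x else 0 := by
  refine ⟨⟨fun x => ?_, ?_⟩, fun A => ?_⟩
  · rw [hP' x]
    split
    · exact div_nonneg (mul_nonneg (hP₁ _) (hP₂ _)) hcpos.le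
    · exact le_refl 0
  · have : ∑ x, P' x = (∑ x : X₁ × X₂,
        if (Γ₁ x.1 ∩ Γ₂ x.2).Nonempty then P₁ x.1 * P₂ x.2 else 0) / c := by
      rw [Finset.sum_div]
      exact Finset.sum_congr rfl fun x _ => by rw [hP' x]; split <;> simp
    rw [this, ← hc, div_self hcpos.ne']
  · rw [hBel A, Finset.sum_div]
    refine Finset.sum_congr rfl fun x _ => ?_
    rw [hP' x]
    by_cases h : (Γ₁ x.1 ∩ Γ₂ x.2).Nonempty ∧ Γ₁ x.1 ∩ Γ₂ x.2 ⊆ A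
    · simp [h, h.1]
    · simp only [if_neg h, zero_div]
end

section
/- When both belief functions are ordinary (additive) probability distributions with Γᵢ single-valued (Γᵢ(x) = {fᵢ(x)}), Dempster's rule of combination yields the probability distribution proportional to the pointwise product of the two distributions: Bel({ω}) = Q₁(ω)Q₂(ω) / ∑_{ω'} Q₁(ω')Q₂(ω'), where Qᵢ(ω) := Pᵢ{x : fᵢ(x) = ω}, assuming the denominator is positive. -/
open scoped Classical

/-- When both belief functions are ordinary probability distributions (the
multivalued mappings are single-valued), Dempster's rule yields the
probability distribution proportional to the pointwise product. -/
theorem stmt_16 {X₁ X₂ Ω : Type*} [Fintype X₁] [Fintype X₂] [Fintype Ω]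
    (P₁ : X₁ → ℝ) (hP₁ : ∀ x, 0 ≤ P₁ x) (hP₁sum : ∑ x, P₁ x = 1)
    (P₂ : X₂ → ℝ) (hP₂ : ∀ x, 0 ≤ P₂ x) (hP₂sum : ∑ x, P₂ x = 1)
    (f₁ : X₁ → Ω) (f₂ : X₂ → Ω)
    (Q₁ Q₂ : Ω → ℝ)
    (hQ₁ : ∀ ω, Q₁ ω = ∑ x, if f₁ x = ω then P₁ x else 0)
    (hQ₂ : ∀ ω, Q₂ ω = ∑ x, if f₂ x = ω then P₂ x else 0)
    (hd : 0 < ∑ ω, Q₁ ω * Q₂ ω) :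
    ∀ ω : Ω,
      (∑ x : X₁ × X₂,
          if (({f₁ x.1} ∩ {f₂ x.2} : Set Ω)).Nonempty ∧
              (({f₁ x.1} ∩ {f₂ x.2} : Set Ω)) ⊆ {ω} then
            P₁ x.1 * P₂ x.2 else 0) /
        (∑ x : X₁ × X₂,
          if (({f₁ x.1} ∩ {f₂ x.2} : Set Ω)).Nonempty then
            P₁ x.1 * P₂ x.2 else 0) =
      Q₁ ω * Q₂ ω / ∑ ω', Q₁ ω' * Q₂ ω' := by
  have key : ∀ ω : Ω, (∑ x : X₁ × X₂,
      if f₁ x.1 = ω ∧ f₂ x.2 = ω then P₁ x.1 * P₂ x.2 else 0) = Q₁ ω * Q₂ ω := by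
    intro ω
    rw [hQ₁, hQ₂, Finset.sum_mul_sum, ← Finset.sum_product']
    apply Finset.sum_congr rfl
    intro x _
    by_cases h1 : f₁ x.1 = ω <;> by_cases h2 : f₂ x.2 = ω <;> simp [h1, h2]
  intro ω
  have hA : ∀ x : X₁ × X₂,
      ((({f₁ x.1} ∩ {f₂ x.2} : Set Ω)).Nonempty ∧
        (({f₁ x.1} ∩ {f₂ x.2} : Set Ω)) ⊆ {ω}) ↔ (f₁ x.1 = ω ∧ f₂ x.2 = ω) := by
    intro x
    constructor
    · rintro ⟨⟨a, ha1, ha2⟩, hsub⟩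
      have := hsub ⟨ha1, ha2⟩
      simp at ha1 ha2 this
      subst this; exact ⟨ha1.symm ▸ rfl, ha2.symm ▸ rfl⟩
    · rintro ⟨h1, h2⟩
      refine ⟨⟨ω, by simp [h1], by simp [h2]⟩, ?_⟩
      rintro a ⟨ha1, _⟩; simp [h1] at ha1; simp [ha1]
  have hB : ∀ x : X₁ × X₂,
      (({f₁ x.1} ∩ {f₂ x.2} : Set Ω)).Nonempty ↔ f₁ x.1 = f₂ x.2 := by
    intro x
    constructor
    · rintro ⟨a, ha1, ha2⟩; simp at ha1 ha2; rw [← ha1, ← ha2]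
    · intro h; exact ⟨f₁ x.1, by simp, by simp [h]⟩
  have hnum : (∑ x : X₁ × X₂,
      if (({f₁ x.1} ∩ {f₂ x.2} : Set Ω)).Nonempty ∧
          (({f₁ x.1} ∩ {f₂ x.2} : Set Ω)) ⊆ {ω} then P₁ x.1 * P₂ x.2 else 0)
      = Q₁ ω * Q₂ ω := by
    rw [← key ω]
    exact Finset.sum_congr rfl fun x _ => by rw [if_congr (hA x) rfl rfl]
  have hden : (∑ x : X₁ × X₂,
      if (({f₁ x.1} ∩ {f₂ x.2} : Set Ω)).Nonempty then P₁ x.1 * P₂ x.2 else 0)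
      = ∑ ω', Q₁ ω' * Q₂ ω' := by
    have : ∀ x : X₁ × X₂,
        (if (({f₁ x.1} ∩ {f₂ x.2} : Set Ω)).Nonempty then P₁ x.1 * P₂ x.2 else 0)
        = ∑ ω' : Ω, if f₁ x.1 = ω' ∧ f₂ x.2 = ω' then P₁ x.1 * P₂ x.2 else 0 := by
      intro x
      rw [if_congr (hB x) rfl rfl]
      by_cases h : f₁ x.1 = f₂ x.2
      · rw [Finset.sum_eq_single (f₂ x.2)]
        · simp [h]
        · intro b _ hb; simp [h, hb]; tauto
        · simp
      · rw [if_neg h, eq_comm]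
        exact Finset.sum_eq_zero fun b _ => if_neg (by
          rintro ⟨h1, h2⟩; exact h (h1.trans h2.symm))
    simp_rw [this]
    rw [Finset.sum_comm]
    exact Finset.sum_congr rfl fun ω' _ => key ω'
  rw [hnum, hden]
end
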